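/- Grenet's upper bound: for every n ≥ 1 there exists a square matrix A of size 2^n − 1 whose entries are affine-linear polynomials with integer coefficients in the n² variables x_{ij} (in fact each entry is a variable x_{ij} or a constant 0 or 1) such that det(A) = PER_n as multivariate polynomials over ℤ; hence the determinantal complexity of the n×n permanent is at most 2^n − 1 over every commutative ring. -/

import Mathlib

open MvPolynomial

/-- The permanent polynomial `PER_n = ∑_{σ ∈ S_n} ∏_i x_{i,σ(i)}` in the `n²`
variables `x_{ij}`, over ℤ. -/
noncomputable def permPolyInt (n : ℕ) : MvPolynomial (Fin n × Fin n) ℤ :=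
  ∑ σ : Equiv.Perm (Fin n), ∏ i, X (i, σ i)

section GrenetConstruction

open Finset

namespace GrenetAux

variable {n : ℕ}

/-- Vertices: proper subsets of `Fin n`. -/
abbrev Vtx (n : ℕ) := {S : Finset (Fin n) // S ≠ Finset.univ}

lemma card_lt (S : Vtx n) : S.1.card < n := by
  have h := Finset.card_lt_card (Finset.ssubset_univ_iff.mpr S.2)
  simpa using h

def rowIdx (S : Vtx n) : Fin n := ⟨S.1.card, card_lt S⟩

noncomputable def M (n : ℕ) : Matrix (Vtx n) (Vtx n) (MvPolynomial (Fin n × Fin n) ℤ) :=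
  fun S T =>
    if S.1 ⊆ T.1 ∧ T.1.card = S.1.card + 1 then ∑ j ∈ T.1 \ S.1, X (rowIdx S, j)
    else if T.1 = ∅ ∧ S.1.card + 1 = n then ∑ j ∈ S.1ᶜ, X (rowIdx S, j)
    else if S = T ∧ S.1 ≠ ∅ then 1 else 0

lemma M_cases (S T : Vtx n) :
    M n S T = 0 ∨ M n S T = 1 ∨ ∃ ij : Fin n × Fin n, M n S T = X ij := by
  unfold M
  split_ifs with h1 h2 h3
  · obtain ⟨a, ha⟩ : ∃ a, T.1 \ S.1 = {a} := by
      rw [← Finset.card_eq_one, Finset.card_sdiff_of_subset h1.1, h1.2]; omega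
    rw [ha, Finset.sum_singleton]; exact Or.inr (Or.inr ⟨_, rfl⟩)
  · obtain ⟨a, ha⟩ : ∃ a, S.1ᶜ = {a} := by
      rw [← Finset.card_eq_one, Finset.card_compl]
      simp only [Fintype.card_fin]; omega
    rw [ha, Finset.sum_singleton]; exact Or.inr (Or.inr ⟨_, rfl⟩)
  · exact Or.inr (Or.inl rfl)
  · exact Or.inl rfl

lemma M_ne_zero {S T : Vtx n} (h : M n S T ≠ 0) :
    (S.1 ⊆ T.1 ∧ T.1.card = S.1.card + 1) ∨ (T.1 = ∅ ∧ S.1.card + 1 = n) ∨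
      (S = T ∧ S.1 ≠ ∅) := by
  by_contra hc
  push_neg at hc
  obtain ⟨h1, h2, h3⟩ := hc
  apply h
  unfold M
  rw [if_neg (by tauto), if_neg (by tauto), if_neg (by tauto)]

lemma M_step {S T : Vtx n} (h1 : S.1 ⊆ T.1) (h2 : T.1.card = S.1.card + 1)
    {a : Fin n} (ha : T.1 \ S.1 = {a}) : M n S T = X (rowIdx S, a) := by
  unfold M
  rw [if_pos ⟨h1, h2⟩, ha, Finset.sum_singleton]

lemma M_last {S T : Vtx n} (hT : T.1 = ∅) (hS : S.1.card + 1 = n)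
    {a : Fin n} (ha : S.1ᶜ = {a}) : M n S T = X (rowIdx S, a) := by
  unfold M
  rw [if_neg, if_pos ⟨hT, hS⟩, ha, Finset.sum_singleton]
  rintro ⟨-, h2⟩
  rw [hT] at h2
  simp at h2

lemma M_diag {S : Vtx n} (hS : S.1 ≠ ∅) : M n S S = 1 := by
  unfold M
  rw [if_neg, if_neg, if_pos ⟨rfl, hS⟩]
  · rintro ⟨h1, -⟩; exact hS h1
  · rintro ⟨-, h2⟩; omega


lemma card_filter_val_lt {k : ℕ} (hk : k ≤ n) :
    ((Finset.univ : Finset (Fin n)).filter fun i : Fin n => (i : ℕ) < k).card = k := by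
  have : ((Finset.univ : Finset (Fin n)).filter fun i : Fin n => (i : ℕ) < k)
      = (Finset.univ : Finset (Fin k)).map (Fin.castLEEmb hk) := by
    ext i
    simp only [Finset.mem_filter, Finset.mem_univ, true_and, Finset.mem_map,
      Fin.castLEEmb_apply]
    constructor
    · intro hi; exact ⟨⟨i, hi⟩, rfl⟩
    · rintro ⟨a, rfl⟩; simpa using a.2
  rw [this, Finset.card_map, Finset.card_univ, Fintype.card_fin]

def chainN (σ : Equiv.Perm (Fin n)) (k : ℕ) : Finset (Fin n) :=
  (Finset.univ.filter fun i : Fin n => (i : ℕ) < k).image σ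

@[simp] lemma chainN_zero (σ : Equiv.Perm (Fin n)) : chainN σ 0 = ∅ := by
  simp [chainN]

lemma card_chainN (σ : Equiv.Perm (Fin n)) {k : ℕ} (hk : k ≤ n) :
    (chainN σ k).card = k := by
  rw [chainN, Finset.card_image_of_injective _ σ.injective, card_filter_val_lt hk]

lemma chainN_succ (σ : Equiv.Perm (Fin n)) {k : ℕ} (hk : k < n) :
    chainN σ (k + 1) = insert (σ ⟨k, hk⟩) (chainN σ k) := by
  unfold chainN
  rw [show (Finset.univ.filter fun i : Fin n => (i : ℕ) < k + 1)
      = insert (⟨k, hk⟩ : Fin n) (Finset.univ.filter fun i : Fin n => (i : ℕ) < k) by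
    ext i
    simp only [Finset.mem_filter, Finset.mem_univ, true_and, Finset.mem_insert, Fin.ext_iff]
    omega]
  rw [Finset.image_insert]

lemma not_mem_chainN (σ : Equiv.Perm (Fin n)) {k : ℕ} (hk : k < n) :
    σ ⟨k, hk⟩ ∉ chainN σ k := by
  unfold chainN
  intro h
  obtain ⟨i, hi, hσ⟩ := Finset.mem_image.mp h
  have : i = ⟨k, hk⟩ := σ.injective hσ
  subst this
  simp only [Finset.mem_filter] at hi
  omega

lemma chainN_mono (σ : Equiv.Perm (Fin n)) {j k : ℕ} (h : j ≤ k) :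
    chainN σ j ⊆ chainN σ k := by
  apply Finset.image_subset_image
  intro i hi
  simp only [Finset.mem_filter, Finset.mem_univ, true_and] at hi ⊢
  omega

lemma chainN_n (σ : Equiv.Perm (Fin n)) : chainN σ n = Finset.univ :=
  Finset.eq_univ_of_card _ (by rw [card_chainN σ le_rfl, Fintype.card_fin])

lemma chainN_ne_univ (σ : Equiv.Perm (Fin n)) {k : ℕ} (hk : k < n) :
    chainN σ k ≠ Finset.univ := by
  intro h
  have := card_chainN σ hk.le
  rw [h, Finset.card_univ, Fintype.card_fin] at this
  omega

def chainV (σ : Equiv.Perm (Fin n)) (k : Fin n) : Vtx n :=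
  ⟨chainN σ k, chainN_ne_univ σ k.2⟩

lemma chainV_injective (σ : Equiv.Perm (Fin n)) : Function.Injective (chainV σ) := by
  intro j k h
  have : (chainV σ j).1.card = (chainV σ k).1.card := by rw [h]
  rw [chainV, chainV] at this
  simp only at this
  rw [card_chainN σ j.2.le, card_chainN σ k.2.le] at this
  exact Fin.ext this

def chainEmb (σ : Equiv.Perm (Fin n)) : Fin n ↪ Vtx n := ⟨chainV σ, chainV_injective σ⟩

noncomputable def Φ (σ : Equiv.Perm (Fin n)) : Equiv.Perm (Vtx n) :=
  (finRotate n).viaFintypeEmbedding (chainEmb σ)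

lemma Φ_apply_chain (σ : Equiv.Perm (Fin n)) (k : Fin n) :
    Φ σ (chainV σ k) = chainV σ (finRotate n k) :=
  Equiv.Perm.viaFintypeEmbedding_apply_image (finRotate n) (chainEmb σ) k

lemma Φ_apply_not_mem (σ : Equiv.Perm (Fin n)) {T : Vtx n}
    (h : T ∉ Set.range (chainV σ)) : Φ σ T = T :=
  Equiv.Perm.viaFintypeEmbedding_apply_notMem_range (finRotate n) (chainEmb σ) h

lemma sign_Φ (hn : 1 ≤ n) (σ : Equiv.Perm (Fin n)) :
    Equiv.Perm.sign (Φ σ) = (-1) ^ (n - 1) := by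
  obtain ⟨m, rfl⟩ := Nat.exists_eq_add_of_le hn
  rw [Φ, Equiv.Perm.viaFintypeEmbedding_sign]
  rw [show 1 + m = m + 1 by omega, sign_finRotate]


lemma rot_val (hn : 1 ≤ n) (k : Fin n) :
    ((finRotate n k : Fin n) : ℕ) = if (k : ℕ) + 1 = n then 0 else (k : ℕ) + 1 := by
  obtain ⟨m, rfl⟩ : ∃ m, n = m + 1 := ⟨n - 1, by omega⟩
  rw [finRotate_succ_apply, Fin.val_add_one]
  split_ifs with h1 h2 h2
  · rfl
  · exact absurd (by rw [h1]; simp) h2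
  · exact absurd (Fin.ext (show (k : ℕ) = (Fin.last m : ℕ) by simp; omega)) h1
  · rfl

lemma mem_chainN_succ_self (σ : Equiv.Perm (Fin n)) {k : ℕ} (hk : k < n) :
    σ ⟨k, hk⟩ ∈ chainN σ (k + 1) := by
  rw [chainN_succ σ hk]; exact Finset.mem_insert_self _ _

lemma compl_chainN (σ : Equiv.Perm (Fin n)) {k : ℕ} (hk : k + 1 = n) :
    (chainN σ k)ᶜ = {σ ⟨k, by omega⟩} := by
  subst hk
  have h1 := chainN_succ σ (show k < k + 1 by omega)
  rw [chainN_n] at h1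
  have h2 := not_mem_chainN σ (show k < k + 1 by omega)
  ext x
  simp only [Finset.mem_compl, Finset.mem_singleton]
  constructor
  · intro hx
    have : x ∈ insert (σ ⟨k, by omega⟩) (chainN σ k) := by rw [← h1]; exact Finset.mem_univ x
    rcases Finset.mem_insert.mp this with h | h
    · exact h
    · exact absurd h hx
  · rintro rfl; exact h2

lemma M_chain (hn : 1 ≤ n) (σ : Equiv.Perm (Fin n)) (k : Fin n) :
    M n (chainV σ k) (chainV σ (finRotate n k)) = X (k, σ k) := by
  have hcard : (chainV σ k).1.card = (k : ℕ) := card_chainN σ k.2.le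
  have hrow : rowIdx (chainV σ k) = k := by
    rw [rowIdx]; exact Fin.ext (by simp [hcard])
  have heta : (⟨(k : ℕ), k.2⟩ : Fin n) = k := Fin.ext rfl
  by_cases hk : (k : ℕ) + 1 = n
  · -- last step: target is chainV σ 0
    have h0 : ((finRotate n k : Fin n) : ℕ) = 0 := by rw [rot_val hn k, if_pos hk]
    have hT : (chainV σ (finRotate n k)).1 = ∅ := by
      show chainN σ _ = ∅
      rw [h0, chainN_zero]
    have hcompl : (chainV σ k).1ᶜ = {σ k} := by
      show (chainN σ (k : ℕ))ᶜ = _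
      rw [compl_chainN σ hk, heta]
    rw [M_last hT (by omega) hcompl, hrow]
  · have hk' : (k : ℕ) + 1 < n := lt_of_le_of_ne k.2 hk
    have h1 : ((finRotate n k : Fin n) : ℕ) = (k : ℕ) + 1 := by rw [rot_val hn k, if_neg hk]
    have hTval : (chainV σ (finRotate n k)).1 = insert (σ k) (chainN σ k) := by
      show chainN σ _ = _
      rw [h1, chainN_succ σ k.2, heta]
    have hnotmem : σ k ∉ chainN σ (k : ℕ) := by
      have := not_mem_chainN σ k.2
      rwa [heta] at this
    suffices h : M n (chainV σ k) (chainV σ (finRotate n k)) = X (rowIdx (chainV σ k), σ k) by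
      rwa [hrow] at h
    apply M_step
    · rw [hTval]; exact Finset.subset_insert _ _
    · rw [hTval, Finset.card_insert_of_notMem hnotmem, hcard, card_chainN σ k.2.le]
    · rw [hTval]
      show insert (σ k) (chainN σ (k:ℕ)) \ chainN σ (k:ℕ) = {σ k}
      ext x
      simp only [Finset.mem_sdiff, Finset.mem_insert, Finset.mem_singleton]
      constructor
      · rintro ⟨h | h, hx⟩
        · exact h
        · exact absurd h hx
      · rintro rfl; exact ⟨Or.inl rfl, hnotmem⟩


lemma mem_range_chainV_of_empty (σ : Equiv.Perm (Fin n)) {S : Vtx n} (hS : S.1 = ∅) :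
    S ∈ Set.range (chainV σ) := by
  have hn : 0 < n := by
    rcases Nat.eq_zero_or_pos n with h | h
    · subst h
      exact absurd (hS.trans Finset.univ_eq_empty.symm) S.2
    · exact h
  exact ⟨⟨0, hn⟩, Subtype.ext (by show chainN σ _ = S.1; rw [hS, chainN_zero])⟩

lemma prod_Φ (hn : 1 ≤ n) (σ : Equiv.Perm (Fin n)) :
    ∏ S : Vtx n, M n S (Φ σ S) = ∏ k : Fin n, X (k, σ k) := by
  classical
  rw [← Finset.prod_mul_prod_compl (Finset.univ.map (chainEmb σ))
    (fun S => M n S (Φ σ S))]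
  have h2 : ∏ S ∈ (Finset.univ.map (chainEmb σ))ᶜ, M n S (Φ σ S) = 1 := by
    apply Finset.prod_eq_one
    intro S hS
    rw [Finset.mem_compl, Finset.mem_map] at hS
    push_neg at hS
    have hrange : S ∉ Set.range (chainV σ) := by
      rintro ⟨k, rfl⟩
      exact hS k (Finset.mem_univ k) rfl
    rw [Φ_apply_not_mem σ hrange]
    apply M_diag
    intro hempty
    exact hrange (mem_range_chainV_of_empty σ hempty)
  rw [h2, mul_one, Finset.prod_map]
  apply Finset.prod_congr rfl
  intro k _
  show M n (chainV σ k) (Φ σ (chainV σ k)) = X (k, σ k)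
  rw [Φ_apply_chain, M_chain hn σ k]

lemma Φ_injective (hn : 1 ≤ n) : Function.Injective (Φ : Equiv.Perm (Fin n) → _) := by
  intro σ σ' h
  have hchain : ∀ k : ℕ, k ≤ n → chainN σ k = chainN σ' k := by
    intro k
    induction k with
    | zero => intro _; simp
    | succ k ih =>
      intro hk1
      have hk : k < n := hk1
      have ihk := ih hk.le
      by_cases hk2 : k + 1 = n
      · rw [hk2, chainN_n, chainN_n]
      · have hk2' : k + 1 < n := by omega
        have hVeq : chainV σ ⟨k, hk⟩ = chainV σ' ⟨k, hk⟩ := Subtype.ext ihk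
        have e1 := Φ_apply_chain σ ⟨k, hk⟩
        have e2 := Φ_apply_chain σ' ⟨k, hk⟩
        rw [← h, ← hVeq] at e2
        have e3 : chainV σ (finRotate n ⟨k, hk⟩) = chainV σ' (finRotate n ⟨k, hk⟩) := by
          rw [← e1, ← e2]
        have hv : ((finRotate n ⟨k, hk⟩ : Fin n) : ℕ) = k + 1 := by
          rw [rot_val hn]; simp [hk2]
        have := Subtype.ext_iff.mp e3
        show chainN σ (k + 1) = chainN σ' (k + 1)
        rw [← hv]
        exact this
  apply Equiv.ext
  intro k
  have h1 : σ k ∈ chainN σ ((k : ℕ) + 1) := by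
    have := mem_chainN_succ_self σ k.2
    rwa [show (⟨(k:ℕ), k.2⟩ : Fin n) = k from Fin.ext rfl] at this
  have h2 : σ k ∉ chainN σ (k : ℕ) := by
    have := not_mem_chainN σ k.2
    rwa [show (⟨(k:ℕ), k.2⟩ : Fin n) = k from Fin.ext rfl] at this
  rw [hchain _ k.2, chainN_succ σ' k.2,
    show (⟨(k:ℕ), k.2⟩ : Fin n) = k from Fin.ext rfl] at h1
  rw [hchain _ k.2.le] at h2
  rcases Finset.mem_insert.mp h1 with h | h
  · exact h
  · exact absurd h h2


lemma exists_sigma (hn : 1 ≤ n) (π : Equiv.Perm (Vtx n))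
    (h : ∀ S : Vtx n, M n S (π S) ≠ 0) : ∃ σ : Equiv.Perm (Fin n), π = Φ σ := by
  classical
  set e0 : Vtx n := ⟨∅, by
    intro huniv
    have := Finset.mem_univ (⟨0, hn⟩ : Fin n)
    rw [← huniv] at this
    exact absurd this (Finset.notMem_empty _)⟩ with he0
  set c : ℕ → Vtx n := fun k => π^[k] e0 with hc
  have hcsucc : ∀ k, c (k + 1) = π (c k) := fun k => Function.iterate_succ_apply' π k e0
  -- cardinalities along the chain
  have key : ∀ k, k < n → ∀ j, j ≤ k → (c j).1.card = j := by
    intro k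
    induction k with
    | zero =>
      intro _ j hj
      interval_cases j
      simp [hc, he0]
    | succ k ih =>
      intro hk1 j hj
      rcases Nat.lt_or_ge j (k + 1) with hj' | hj'
      · exact ih (by omega) j (by omega)
      · have hj2 : j = k + 1 := by omega
        subst hj2
        have hck : (c k).1.card = k := ih (by omega) k le_rfl
        have hM := h (c k)
        rw [← hcsucc k] at hM
        rcases M_ne_zero hM with ⟨-, h2⟩ | ⟨-, h2⟩ | ⟨heq, hne⟩
        · omega
        · omega
        · exfalso
          rcases Nat.eq_zero_or_pos k with hk0 | hk0
          · subst hk0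
            exact hne (by simp [hc, he0])
          · have e1 : π (c (k - 1)) = c k := by
              rw [← hcsucc (k - 1), show k - 1 + 1 = k by omega]
            have e2 : π (c k) = c k := by rw [← hcsucc k, ← heq]
            have : c (k - 1) = c k := π.injective (by rw [e1, e2])
            have hck1 : (c (k - 1)).1.card = k - 1 := ih (by omega) (k - 1) (by omega)
            rw [this, hck] at hck1
            omega
  -- each intermediate step is an insertion step
  have hstep : ∀ k, k + 1 < n →
      (c k).1 ⊆ (c (k + 1)).1 ∧ (c (k + 1)).1.card = (c k).1.card + 1 := by
    intro k hk
    have hck : (c k).1.card = k := key k (by omega) k le_rfl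
    have hck1 : (c (k + 1)).1.card = k + 1 := key (k + 1) hk (k + 1) le_rfl
    have hM := h (c k)
    rw [← hcsucc k] at hM
    rcases M_ne_zero hM with h1 | ⟨-, h2⟩ | ⟨heq, -⟩
    · exact h1
    · omega
    · exfalso
      have := congrArg (fun S : Vtx n => S.1.card) heq
      omega
  -- the last step closes the cycle
  have hlast : π (c (n - 1)) = e0 := by
    have hM := h (c (n - 1))
    have hcard : (c (n - 1)).1.card = n - 1 := key (n - 1) (by omega) (n - 1) le_rfl
    rcases M_ne_zero hM with ⟨-, h2⟩ | ⟨h1, -⟩ | ⟨heq, hne⟩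
    · exfalso
      have := card_lt (π (c (n - 1)))
      omega
    · exact Subtype.ext h1
    · exfalso
      rcases Nat.lt_or_ge n 2 with hn2 | hn2
      · have hn1 : n = 1 := by omega
        apply hne
        show (c (n - 1)).1 = ∅
        rw [show n - 1 = 0 by omega]
        simp [hc, he0]
      · have e1 : π (c (n - 2)) = c (n - 1) := by
          rw [← hcsucc (n - 2), show n - 2 + 1 = n - 1 by omega]
        have : c (n - 2) = c (n - 1) := π.injective (by rw [e1, ← heq])
        have h1 : (c (n - 2)).1.card = n - 2 := key (n - 1) (by omega) (n - 2) (by omega)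
        rw [this, hcard] at h1
        omega
  -- extract the added elements
  have hdiff : ∀ k, k + 1 < n → ∃ a, (c (k + 1)).1 \ (c k).1 = {a} := by
    intro k hk
    rw [← Finset.card_eq_one, Finset.card_sdiff_of_subset (hstep k hk).1, (hstep k hk).2]
    omega
  have hlastdiff : ∃ a, ((c (n - 1)).1)ᶜ = {a} := by
    rw [← Finset.card_eq_one, Finset.card_compl, Fintype.card_fin,
      key (n - 1) (by omega) (n - 1) le_rfl]
    omega
  set σ₀ : Fin n → Fin n := fun k =>
    if hk : (k : ℕ) + 1 < n then (hdiff (k : ℕ) hk).choose else hlastdiff.choose with hσ₀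
  have f1 : ∀ k : Fin n, ((k : ℕ) + 1 < n) →
      (c ((k : ℕ) + 1)).1 = insert (σ₀ k) (c (k : ℕ)).1 ∧ σ₀ k ∉ (c (k : ℕ)).1 := by
    intro k hk
    have hspec := (hdiff (k : ℕ) hk).choose_spec
    have hσ : σ₀ k = (hdiff (k : ℕ) hk).choose := dif_pos hk
    rw [hσ]
    set a := (hdiff (k : ℕ) hk).choose
    have hsub := (hstep (k : ℕ) hk).1
    have hmem : a ∈ (c ((k : ℕ) + 1)).1 \ (c (k : ℕ)).1 := by
      rw [hspec]; exact Finset.mem_singleton_self a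
    rw [Finset.mem_sdiff] at hmem
    refine ⟨?_, hmem.2⟩
    ext x
    simp only [Finset.mem_insert]
    constructor
    · intro hx
      by_cases hxc : x ∈ (c (k : ℕ)).1
      · exact Or.inr hxc
      · left
        have : x ∈ (c ((k : ℕ) + 1)).1 \ (c (k : ℕ)).1 := Finset.mem_sdiff.mpr ⟨hx, hxc⟩
        rw [hspec] at this
        exact Finset.mem_singleton.mp this
    · rintro (rfl | hx)
      · exact hmem.1
      · exact hsub hx
  have f2 : ∀ k : Fin n, ((k : ℕ) + 1 = n) → ((c (n - 1)).1)ᶜ = {σ₀ k} := by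
    intro k hk
    have hσ : σ₀ k = hlastdiff.choose := dif_neg (by omega)
    rw [hσ]
    exact hlastdiff.choose_spec
  have hmemnot : ∀ k : Fin n, σ₀ k ∉ (c (k : ℕ)).1 := by
    intro k
    by_cases hk : (k : ℕ) + 1 < n
    · exact (f1 k hk).2
    · have hk' : (k : ℕ) + 1 = n := by have := k.2; omega
      have : σ₀ k ∈ ((c (n - 1)).1)ᶜ := by
        rw [f2 k hk']; exact Finset.mem_singleton_self _
      rw [Finset.mem_compl] at this
      rwa [show (k : ℕ) = n - 1 by omega]
  have hsubchain : ∀ j k : ℕ, j ≤ k → k < n → (c j).1 ⊆ (c k).1 := by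
    intro j k hjk hk
    obtain ⟨d, rfl⟩ := Nat.exists_eq_add_of_le hjk
    clear hjk
    induction d with
    | zero => simp
    | succ d ih =>
      refine (ih (by omega)).trans ?_
      rw [show j + (d + 1) = (j + d) + 1 by omega]
      exact (hstep (j + d) (by omega)).1
  have hinj : Function.Injective σ₀ := by
    have hlt : ∀ j k : Fin n, (j : ℕ) < (k : ℕ) → σ₀ j ≠ σ₀ k := by
      intro j k hjk heq
      have h1 : σ₀ j ∈ (c ((j : ℕ) + 1)).1 := by
        have hj1 : (j : ℕ) + 1 < n := by have := k.2; omega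
        rw [(f1 j hj1).1]
        exact Finset.mem_insert_self _ _
      have h2 : σ₀ j ∈ (c (k : ℕ)).1 :=
        hsubchain ((j : ℕ) + 1) (k : ℕ) (by omega) k.2 h1
      rw [heq] at h2
      exact hmemnot k h2
    intro j k heq
    by_contra hne
    rcases Nat.lt_or_ge (j : ℕ) (k : ℕ) with hlt' | hge
    · exact hlt j k hlt' heq
    · have : (k : ℕ) < (j : ℕ) := by
        rcases Nat.lt_or_ge (k : ℕ) (j : ℕ) with h' | h'
        · exact h'
        · exact absurd (Fin.ext (by omega)) hne
      exact hlt k j this heq.symm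
  set σ : Equiv.Perm (Fin n) :=
    Equiv.ofBijective σ₀ ((Fintype.bijective_iff_injective_and_card σ₀).mpr ⟨hinj, rfl⟩)
    with hσdef
  have hσapp : ∀ k : Fin n, σ k = σ₀ k := fun k => rfl
  -- the chain of σ agrees with the orbit of π
  have hcv : ∀ k : ℕ, k < n → chainN σ k = (c k).1 := by
    intro k
    induction k with
    | zero => intro _; simp [hc, he0]
    | succ k ih =>
      intro hk1
      have hk : k < n := by omega
      rw [chainN_succ σ hk, ih hk, hσapp]
      exact ((f1 ⟨k, hk⟩ (by simpa using hk1)).1).symm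
  have hchainVc : ∀ k : Fin n, chainV σ k = c (k : ℕ) :=
    fun k => Subtype.ext (hcv (k : ℕ) k.2)
  have hπchain : ∀ k : Fin n, π (chainV σ k) = chainV σ (finRotate n k) := by
    intro k
    rw [hchainVc k, hchainVc (finRotate n k), ← hcsucc (k : ℕ)]
    by_cases hk : (k : ℕ) + 1 = n
    · have h0 : ((finRotate n k : Fin n) : ℕ) = 0 := by rw [rot_val hn, if_pos hk]
      rw [h0]
      show c ((k : ℕ) + 1) = c 0
      rw [hcsucc, show (k : ℕ) = n - 1 by omega, hlast]
      rfl
    · have h1 : ((finRotate n k : Fin n) : ℕ) = (k : ℕ) + 1 := by rw [rot_val hn, if_neg hk]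
      rw [h1]
  refine ⟨σ, Equiv.ext fun T => ?_⟩
  by_cases hT : T ∈ Set.range (chainV σ)
  · obtain ⟨k, rfl⟩ := hT
    rw [hπchain k, Φ_apply_chain]
  · rw [Φ_apply_not_mem σ hT]
    by_contra hne
    have hclosed : ∀ U : Vtx n, U ∉ Set.range (chainV σ) → π U ∉ Set.range (chainV σ) := by
      rintro U hU ⟨j, hj⟩
      apply hU
      have : π (chainV σ ((finRotate n).symm j)) = chainV σ j := by
        rw [hπchain, Equiv.apply_symm_apply]
      exact ⟨(finRotate n).symm j, π.injective (by rw [this, hj])⟩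
    have grow : ∀ m : ℕ, (π^[m] T ∉ Set.range (chainV σ)) ∧ π (π^[m] T) ≠ π^[m] T ∧
        (π^[m] T).1.card = T.1.card + m := by
      intro m
      induction m with
      | zero => exact ⟨hT, hne, rfl⟩
      | succ m ih =>
        obtain ⟨ih1, ih2, ih3⟩ := ih
        have hiter : π^[m + 1] T = π (π^[m] T) := Function.iterate_succ_apply' π m T
        have hU' : π^[m + 1] T ∉ Set.range (chainV σ) := by
          rw [hiter]; exact hclosed _ ih1
        refine ⟨hU', ?_, ?_⟩
        · intro hfix
          rw [hiter] at hfix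
          exact ih2 (π.injective hfix)
        · have hM := h (π^[m] T)
          rcases M_ne_zero hM with ⟨-, h2⟩ | ⟨h1, -⟩ | ⟨heq, -⟩
          · rw [hiter, h2, ih3]; omega
          · exfalso
            apply hU'
            rw [hiter]
            exact mem_range_chainV_of_empty σ h1
          · exact absurd heq.symm ih2
    have := (grow n).2.2
    have := card_lt (π^[n] T)
    omega


lemma detM (hn : 1 ≤ n) :
    (M n).det = (-1) ^ (n - 1) *
      ∑ σ : Equiv.Perm (Fin n), ∏ k : Fin n, X (k, σ k) := by
  classical
  rw [Matrix.det_apply']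
  set Ψ : Equiv.Perm (Fin n) → Equiv.Perm (Vtx n) := fun σ => (Φ σ)⁻¹ with hΨ
  have hΨinj : Function.Injective Ψ := fun a b hab => Φ_injective hn (inv_injective hab)
  have hvanish : ∀ π ∈ (Finset.univ : Finset (Equiv.Perm (Vtx n))),
      π ∉ Finset.univ.image Ψ →
      ((Equiv.Perm.sign π : ℤ) : MvPolynomial (Fin n × Fin n) ℤ) * ∏ i, M n (π i) i = 0 := by
    intro π _ hπ
    suffices hp : ∏ i, M n (π i) i = 0 by rw [hp, mul_zero]
    by_contra hp
    have hfac := Finset.prod_ne_zero_iff.mp hp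
    have hall : ∀ S : Vtx n, M n S (π⁻¹ S) ≠ 0 := by
      intro S
      have := hfac (π⁻¹ S) (Finset.mem_univ _)
      rwa [← Equiv.Perm.mul_apply, mul_inv_cancel, Equiv.Perm.one_apply] at this
    obtain ⟨σ, hσ⟩ := exists_sigma hn π⁻¹ hall
    apply hπ
    refine Finset.mem_image.mpr ⟨σ, Finset.mem_univ _, ?_⟩
    show (Φ σ)⁻¹ = π
    rw [← hσ, inv_inv]
  rw [← Finset.sum_subset (Finset.subset_univ (Finset.univ.image Ψ)) hvanish,
    Finset.sum_image (fun a _ b _ hab => hΨinj hab), Finset.mul_sum]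
  apply Finset.sum_congr rfl
  intro σ _
  have hsign : Equiv.Perm.sign (Ψ σ) = (-1) ^ (n - 1) := by
    rw [hΨ]
    simp only [Equiv.Perm.sign_inv]
    exact sign_Φ hn σ
  have hprod : ∏ i, M n (Ψ σ i) i = ∏ i, M n i (Φ σ i) := by
    rw [← Equiv.prod_comp (Φ σ) (fun i => M n (Ψ σ i) i)]
    apply Finset.prod_congr rfl
    intro i _
    rw [hΨ]
    simp
  rw [hprod, prod_Φ hn σ, hsign]
  congr 1
  push_cast
  norm_num


lemma card_Vtx (n : ℕ) : Fintype.card (Vtx n) = 2 ^ n - 1 := by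
  have : Fintype.card (Vtx n) =
      Fintype.card (Finset (Fin n)) - Fintype.card {S : Finset (Fin n) // S = Finset.univ} :=
    Fintype.card_subtype_compl _
  rw [this, Fintype.card_subtype_eq, Fintype.card_finset, Fintype.card_fin]

end GrenetAux

theorem grenet_upper_bound' (n : ℕ) (hn : 1 ≤ n) :
    ∃ A : Matrix (Fin (2 ^ n - 1)) (Fin (2 ^ n - 1)) (MvPolynomial (Fin n × Fin n) ℤ),
      (∀ p q, A p q = 0 ∨ A p q = 1 ∨ ∃ ij : Fin n × Fin n, A p q = X ij) ∧
      A.det = ∑ σ : Equiv.Perm (Fin n), ∏ i, X (i, σ i) := by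
  classical
  have e : Fin (2 ^ n - 1) ≃ GrenetAux.Vtx n :=
    Fintype.equivOfCardEq (by rw [GrenetAux.card_Vtx, Fintype.card_fin])
  rcases Nat.even_or_odd n with hev | hodd
  · have hn2 : 2 ≤ n := by
      rcases hev with ⟨k, hk⟩; omega
    have hv0 : (∅ : Finset (Fin n)) ≠ Finset.univ := by
      intro h
      have := Finset.mem_univ (⟨0, by omega⟩ : Fin n)
      rw [← h] at this
      exact absurd this (Finset.notMem_empty _)
    have hv1 : ({⟨0, by omega⟩} : Finset (Fin n)) ≠ Finset.univ := by
      intro h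
      have := congrArg Finset.card h
      rw [Finset.card_singleton, Finset.card_univ, Fintype.card_fin] at this
      omega
    set v0 : GrenetAux.Vtx n := ⟨∅, hv0⟩
    set v1 : GrenetAux.Vtx n := ⟨{⟨0, by omega⟩}, hv1⟩
    have hv01 : v0 ≠ v1 := by
      intro h
      exact (Finset.singleton_ne_empty _) (Subtype.ext_iff.mp h).symm
    refine ⟨((GrenetAux.M n).submatrix (Equiv.swap v0 v1) id).submatrix e e,
      fun p q => GrenetAux.M_cases _ _, ?_⟩
    rw [Matrix.det_submatrix_equiv_self, Matrix.det_permute, GrenetAux.detM hn,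
      Equiv.Perm.sign_swap hv01]
    have hpow : ((-1 : MvPolynomial (Fin n × Fin n) ℤ)) ^ (n - 1) = -1 :=
      Odd.neg_one_pow (by rcases hev with ⟨k, hk⟩; exact ⟨k - 1, by omega⟩)
    rw [hpow]
    push_cast
    ring
  · refine ⟨(GrenetAux.M n).submatrix e e, fun p q => GrenetAux.M_cases _ _, ?_⟩
    rw [Matrix.det_submatrix_equiv_self, GrenetAux.detM hn]
    have hpow : ((-1 : MvPolynomial (Fin n × Fin n) ℤ)) ^ (n - 1) = 1 :=
      Even.neg_one_pow (by rcases hodd with ⟨k, hk⟩; exact ⟨k, by omega⟩)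
    rw [hpow, one_mul]


end GrenetConstruction

/-- **Grenet's upper bound**: for every `n ≥ 1` there is a square matrix of size `2^n − 1`,
each of whose entries is one of the variables `x_{ij}` or a constant `0` or `1` (in
particular, an affine-linear polynomial with integer coefficients), whose determinant equals
the permanent polynomial `PER_n` over ℤ. Hence the determinantal complexity of the `n × n`
permanent is at most `2^n − 1` over every commutative ring. -/
theorem grenet_upper_bound (n : ℕ) (hn : 1 ≤ n) :
    ∃ A : Matrix (Fin (2 ^ n - 1)) (Fin (2 ^ n - 1)) (MvPolynomial (Fin n × Fin n) ℤ),
      (∀ p q, A p q = 0 ∨ A p q = 1 ∨ ∃ ij : Fin n × Fin n, A p q = X ij) ∧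
      A.det = permPolyInt n := by
  obtain ⟨A, h1, h2⟩ := grenet_upper_bound' n hn
  exact ⟨A, h1, by rw [permPolyInt]; exact h2⟩
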